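/- The Fourier transform of the shifted Heaviside step function satisfies, in the sense of distributions, (1/√(2π)) ∫ e^{−iqy} θ(∓(y−y₀)) dy = ± (i/√(2π)) · e^{−iqy₀}/(q ± i0⁺), i.e., the tempered distribution y ↦ θ(y₀ − y) has Fourier transform i e^{−iqy₀} · lim_{ε→0⁺} 1/(q + iε) up to the normalization √(2π). -/

import Mathlib

open Filter
open MeasureTheory Set Complex Real
open scoped FourierTransform

lemma aux_rexp_int {b : ℝ} (hb : 0 < b) (a : ℝ) :
    IntegrableOn (fun y : ℝ => Real.exp (b * y)) (Set.Iic a) := by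
  have h1 : Integrable ((Set.Iic (b*a)).indicator Real.exp) :=
    (integrable_indicator_iff measurableSet_Iic).2 (integrableOn_exp_Iic (b*a))
  have h2 : Integrable (fun x : ℝ => (Set.Iic (b*a)).indicator Real.exp (b*x)) :=
    (integrable_comp_mul_left_iff _ hb.ne').2 h1
  refine (integrable_indicator_iff measurableSet_Iic).mp ?_
  refine h2.congr (Filter.Eventually.of_forall fun x => ?_)
  symm
  show _ = (Set.Iic (b*a)).indicator Real.exp (b*x)
  by_cases hx : x ≤ a
  · rw [Set.indicator_of_mem (Set.mem_Iic.2 hx), Set.indicator_of_mem (Set.mem_Iic.2 ((mul_le_mul_iff_right₀ hb).2 hx))]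
  · rw [Set.indicator_of_notMem (fun h => hx (Set.mem_Iic.1 h)), Set.indicator_of_notMem
      (fun h => hx ((mul_le_mul_iff_right₀ hb).1 (Set.mem_Iic.1 h)))]

lemma aux_cexp_int {c : ℂ} (hc : 0 < c.re) (a : ℝ) :
    IntegrableOn (fun y : ℝ => Complex.exp (c * y)) (Set.Iic a) := by
  refine Integrable.mono' (aux_rexp_int hc a)
    ((Complex.continuous_exp.comp (continuous_const.mul Complex.continuous_ofReal)).aestronglyMeasurable) ?_
  filter_upwards with y
  simp [Complex.norm_exp, Complex.mul_re]

lemma aux_cexp_integral {c : ℂ} (hc : 0 < c.re) (a : ℝ) :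
    ∫ y in Set.Iic a, Complex.exp (c * y) = Complex.exp (c * a) / c := by
  have hc0 : c ≠ 0 := fun h => by simp [h] at hc
  have key : ∫ y in Set.Iic a, Complex.exp (c * y)
      = Complex.exp (c * a) / c - 0 := by
    refine integral_Iic_of_hasDerivAt_of_tendsto' (f := fun y : ℝ => Complex.exp (c * y) / c)
      (fun x _ => ?_) (aux_cexp_int hc a) ?_
    · have H := (((Complex.ofRealCLM.hasDerivAt (x := x)).const_mul c).cexp).div_const c
      refine H.congr_deriv ?_
      simp [hc0]
    · rw [show (0:ℂ) = 0 / c by simp]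
      apply Filter.Tendsto.div_const
      rw [tendsto_zero_iff_norm_tendsto_zero]
      have h1 : Tendsto (fun y : ℝ => c.re * y) atBot atBot :=
        (tendsto_id (α := ℝ)).const_mul_atBot hc
      have := Real.tendsto_exp_atBot.comp h1
      refine this.congr (fun y => ?_)
      simp [Complex.norm_exp, Complex.mul_re]
  simpa using key

lemma aux_ghat (g : SchwartzMap ℝ ℂ) (y : ℝ) :
    (∫ q : ℝ, g q * Complex.exp (-(Complex.I * q * y)))
      = 𝓕 (g : ℝ → ℂ) (y / (2 * Real.pi)) := by
  rw [Real.fourier_real_eq_integral_exp_smul]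
  congr 1
  funext q
  rw [smul_eq_mul, mul_comm]
  congr 2
  push_cast
  have : (2:ℂ) * Real.pi ≠ 0 := by simp [Real.pi_ne_zero]
  field_simp

/-- Distributional Fourier transform of the shifted Heaviside step function:
for every Schwartz test function `g` (with `ĝ(y) = ∫ g(q) e^{−iqy} dq`),
`∫ θ(y₀−y) ĝ(y) dy = lim_{ε→0⁺} ∫ g(q) · i e^{−iqy₀}/(q+iε) dq`. -/
theorem stmt10 (g : SchwartzMap ℝ ℂ) (y₀ : ℝ) :
    Tendsto
      (fun ε : ℝ => ∫ q : ℝ,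
        g q * (Complex.I * Complex.exp (-(Complex.I * q * y₀)) / (q + Complex.I * ε)))
      (nhdsWithin 0 (Set.Ioi 0))
      (nhds (∫ y in Set.Iic y₀, ∫ q : ℝ, g q * Complex.exp (-(Complex.I * q * y)))) := by
  set G : SchwartzMap ℝ ℂ := SchwartzMap.fourierTransformCLM ℂ g with hGdef
  set gh : ℝ → ℂ := fun y => ∫ q : ℝ, g q * Complex.exp (-(Complex.I * q * y)) with hgh
  have hghG : ∀ y : ℝ, gh y = G (y / (2 * Real.pi)) := by
    intro y
    rw [hGdef, SchwartzMap.fourierTransformCLM_apply]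
    exact aux_ghat g y
  have hghcont : Continuous gh := by
    have : Continuous fun y : ℝ => G (y / (2 * Real.pi)) :=
      G.continuous.comp (continuous_id.div_const _)
    exact this.congr (fun y => (hghG y).symm)
  have hghint : Integrable gh := by
    have h1 : Integrable (fun y : ℝ => G ((2 * Real.pi)⁻¹ * y)) :=
      (integrable_comp_mul_left_iff (G : ℝ → ℂ)
        (inv_ne_zero (by positivity : (2 * Real.pi) ≠ 0))).2 G.integrable
    refine h1.congr (Filter.Eventually.of_forall fun y => ?_)
    rw [hghG y, div_eq_inv_mul]
  -- Key identity for ε > 0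
  have key : ∀ ε : ℝ, ε ∈ Set.Ioi (0:ℝ) →
      (∫ q : ℝ, g q * (Complex.I * Complex.exp (-(Complex.I * q * y₀)) / (q + Complex.I * ε)))
        = ∫ y in Set.Iic y₀, Complex.exp ((ε:ℂ) * (y - y₀)) * gh y := by
    intro ε hε
    have hε' : (0:ℝ) < ε := hε
    have pointwise : ∀ q : ℝ,
        g q * (Complex.I * Complex.exp (-(Complex.I * q * y₀)) / (q + Complex.I * ε))
          = ∫ y in Set.Iic y₀,
              g q * Complex.exp (((ε:ℂ) - Complex.I * q) * y) * Complex.exp (-(ε:ℂ) * y₀) := by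
      intro q
      have hre : (0:ℝ) < ((ε:ℂ) - Complex.I * q).re := by simp [hε']
      have step : (∫ y in Set.Iic y₀,
          g q * Complex.exp (((ε:ℂ) - Complex.I * q) * y) * Complex.exp (-(ε:ℂ) * y₀))
          = (g q * Complex.exp (-(ε:ℂ) * y₀))
            * ∫ y in Set.Iic y₀, Complex.exp (((ε:ℂ) - Complex.I * q) * y) := by
        rw [← integral_const_mul]
        congr 1
        funext y
        ring
      rw [step, aux_cexp_integral hre y₀]
      have h1 : ((ε:ℂ) - Complex.I * q) ≠ 0 := fun h => by
        simpa [hε'.ne'] using congrArg Complex.re h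
      have h2 : ((q:ℂ) + Complex.I * ε) ≠ 0 := fun h => by
        simpa [hε'.ne'] using congrArg Complex.im h
      have hexp : Complex.exp (-((ε:ℂ) * y₀)) * Complex.exp (((ε:ℂ) - Complex.I * q) * y₀)
          = Complex.exp (-(Complex.I * q * y₀)) := by
        rw [← Complex.exp_add]
        congr 1
        ring
      field_simp
      linear_combination (norm := ring_nf) (-(g q * ((q:ℂ) + Complex.I * ε))) * hexp
        + (-(g q * Complex.exp (-(Complex.I * q * y₀)) * (q:ℂ))) * Complex.I_sq
    -- Fubini
    have hcont2 : Continuous (fun p : ℝ × ℝ =>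
        g p.1 * Complex.exp (((ε:ℂ) - Complex.I * p.1) * p.2) * Complex.exp (-(ε:ℂ) * y₀)) := by
      refine (((g.continuous.comp continuous_fst).mul (Complex.continuous_exp.comp
        ?_)).mul continuous_const)
      exact (continuous_const.sub (continuous_const.mul
        (Complex.continuous_ofReal.comp continuous_fst))).mul
        (Complex.continuous_ofReal.comp continuous_snd)
    have hbd : Integrable (fun p : ℝ × ℝ => ‖g p.1‖ * (Real.exp (ε * p.2) * Real.exp (-(ε * y₀))))
        ((volume : Measure ℝ).prod ((volume : Measure ℝ).restrict (Set.Iic y₀))) := by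
      exact Integrable.mul_prod (g.integrable.norm)
        ((aux_rexp_int hε' y₀).mul_const (Real.exp (-(ε * y₀))))
    have hF : Integrable (Function.uncurry fun q y : ℝ =>
        g q * Complex.exp (((ε:ℂ) - Complex.I * q) * y) * Complex.exp (-(ε:ℂ) * y₀))
        ((volume : Measure ℝ).prod ((volume : Measure ℝ).restrict (Set.Iic y₀))) := by
      refine hbd.mono' hcont2.aestronglyMeasurable ?_
      filter_upwards with p
      have e1 : ‖Complex.exp (((ε:ℂ) - Complex.I * p.1) * p.2)‖ = Real.exp (ε * p.2) := by
        simp [Complex.norm_exp, Complex.mul_re]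
      have e2 : ‖Complex.exp (-(ε:ℂ) * y₀)‖ = Real.exp (-(ε * y₀)) := by
        simp [Complex.norm_exp]
      rw [Function.uncurry, norm_mul, norm_mul, e1, e2]
      exact le_of_eq (by ring)
    calc (∫ q : ℝ, g q * (Complex.I * Complex.exp (-(Complex.I * q * y₀)) / (q + Complex.I * ε)))
        = ∫ q : ℝ, ∫ y in Set.Iic y₀,
            g q * Complex.exp (((ε:ℂ) - Complex.I * q) * y) * Complex.exp (-(ε:ℂ) * y₀) := by
          exact integral_congr_ae (Filter.Eventually.of_forall pointwise)
      _ = ∫ y in Set.Iic y₀, ∫ q : ℝ,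
            g q * Complex.exp (((ε:ℂ) - Complex.I * q) * y) * Complex.exp (-(ε:ℂ) * y₀) :=
          integral_integral_swap hF
      _ = ∫ y in Set.Iic y₀, Complex.exp ((ε:ℂ) * (y - y₀)) * gh y := by
          refine integral_congr_ae (Filter.Eventually.of_forall fun y => ?_)
          have e3 : ∀ q : ℝ, g q * Complex.exp (((ε:ℂ) - Complex.I * q) * y)
              * Complex.exp (-(ε:ℂ) * y₀)
              = Complex.exp ((ε:ℂ) * (y - y₀)) * (g q * Complex.exp (-(Complex.I * q * y))) := by
            intro q
            rw [mul_assoc, ← Complex.exp_add, mul_comm (Complex.exp ((ε:ℂ) * (y - y₀))),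
              mul_assoc, ← Complex.exp_add]
            congr 2
            ring
          simp_rw [e3]
          rw [integral_const_mul]
  -- Dominated convergence
  have main : Tendsto (fun ε : ℝ => ∫ y in Set.Iic y₀, Complex.exp ((ε:ℂ) * (y - y₀)) * gh y)
      (nhdsWithin 0 (Set.Ioi 0)) (nhds (∫ y in Set.Iic y₀, gh y)) := by
    refine tendsto_integral_filter_of_dominated_convergence (fun y => ‖gh y‖)
      ?_ ?_ ?_ ?_
    · filter_upwards with ε
      refine ((Complex.continuous_exp.comp ?_).mul hghcont).aestronglyMeasurable
      exact continuous_const.mul (Complex.continuous_ofReal.sub continuous_const)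
    · filter_upwards [self_mem_nhdsWithin] with ε (hε : (0:ℝ) < ε)
      refine (ae_restrict_iff' measurableSet_Iic).2 (Filter.Eventually.of_forall fun y hy => ?_)
      have h1 : ‖Complex.exp ((ε:ℂ) * (y - y₀))‖ = Real.exp (ε * (y - y₀)) := by
        simp [Complex.norm_exp, Complex.mul_re]
      rw [norm_mul, h1]
      have : Real.exp (ε * (y - y₀)) ≤ 1 := by
        rw [Real.exp_le_one_iff]
        exact mul_nonpos_of_nonneg_of_nonpos hε.le (by linarith [Set.mem_Iic.1 hy])
      nlinarith [norm_nonneg (gh y), Real.exp_pos (ε * (y - y₀))]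
    · exact hghint.norm.integrableOn
    · refine Filter.Eventually.of_forall fun y => ?_
      have hc : Continuous (fun ε : ℝ => Complex.exp ((ε:ℂ) * (y - y₀)) * gh y) := by
        refine (Complex.continuous_exp.comp ?_).mul continuous_const
        exact Complex.continuous_ofReal.mul continuous_const
      have := (hc.tendsto 0).mono_left (nhdsWithin_le_nhds (s := Set.Ioi (0:ℝ)))
      simpa using this
  have hkey : (fun ε : ℝ => ∫ q : ℝ,
      g q * (Complex.I * Complex.exp (-(Complex.I * q * y₀)) / (q + Complex.I * ε)))
      =ᶠ[nhdsWithin 0 (Set.Ioi 0)]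
      (fun ε : ℝ => ∫ y in Set.Iic y₀, Complex.exp ((ε:ℂ) * (y - y₀)) * gh y) := by
    filter_upwards [self_mem_nhdsWithin] with ε hε using key ε hε
  exact main.congr' hkey.symm
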